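/- Define f(t) := (e^{2t}t⁴ − eᵗt⁴ − 4t³eᵗ − 4t³e^{2t} + 12t²e^{2t} − 12eᵗt² − 12eᵗ + 12e^{2t} − 4e^{3t} + 4) / (−eᵗ + 1 − 2t + t²) for t > 0. Then there exist δ > 0 and C > 0 such that for all t ∈ (0, δ), |f(t) − (t⁸/6480 + t⁹/3888 + 869t¹⁰/4082400 + 37t¹¹/326592 + 1213t¹²/29393280)| ≤ C·t¹³. In particular f(t)/t⁸ → 1/6480 as t → 0⁺. -/

import Mathlib

open Real

/-- `f(t) = det Λ(t)` as an explicit function. -/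
noncomputable def f (t : ℝ) : ℝ :=
  (Real.exp (2*t) * t^4 - Real.exp t * t^4 - 4*t^3*Real.exp t - 4*t^3*Real.exp (2*t)
    + 12*t^2*Real.exp (2*t) - 12*Real.exp t*t^2 - 12*Real.exp t + 12*Real.exp (2*t)
    - 4*Real.exp (3*t) + 4) / (-Real.exp t + 1 - 2*t + t^2)

/-- Degree-13 Taylor polynomial of `exp`. -/
noncomputable def T (x : ℝ) : ℝ :=
  1 + x + (1/2)*x^2 + (1/6)*x^3 + (1/24)*x^4 + (1/120)*x^5 + (1/720)*x^6 + (1/5040)*x^7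
    + (1/40320)*x^8 + (1/362880)*x^9 + (1/3628800)*x^10 + (1/39916800)*x^11
    + (1/479001600)*x^12 + (1/6227020800)*x^13

lemma exp_taylor_bound (x : ℝ) (hx : |x| ≤ 1) : |Real.exp x - T x| ≤ |x|^14 := by
  have h := Real.exp_bound hx (by norm_num : 0 < 14)
  have hs : ∑ i ∈ Finset.range 14, x ^ i / (Nat.factorial i : ℝ) = T x := by
    simp [Finset.sum_range_succ, Nat.factorial, T]
    ring
  rw [hs] at h
  refine h.trans ?_
  have h14 : (0:ℝ) ≤ |x|^14 := by positivity
  have hc : ((Nat.succ 14 : ℝ) / ((Nat.factorial 14 : ℝ) * 14)) ≤ 1 := by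
    norm_num [Nat.factorial]
  calc |x|^14 * ((Nat.succ 14 : ℝ) / ((Nat.factorial 14 : ℝ) * 14)) ≤ |x|^14 * 1 := by gcongr
    _ = |x|^14 := by ring

/-- The polynomial `P` of the expansion. -/
noncomputable def P (t : ℝ) : ℝ :=
  t^8/6480 + t^9/3888 + 869*t^10/4082400 + 37*t^11/326592 + 1213*t^12/29393280

/-- The factored tail polynomial. -/
noncomputable def H (t : ℝ) : ℝ :=
  (609947/3233260800) + (58778641/1260971712000)*t^1 + (31777789/5043886848000)*t^2
    + (32936047/17653603968000)*t^3 + (15893/185177664000)*t^4 + (42221/3621252096000)*t^5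
    + (19027/13579695360000)*t^6 + (1437929/9532946142720000)*t^7
    + (560393/38131784570880000)*t^8 + (18089/13866103480320000)*t^9
    + (19099/183032565940224000)*t^10 + (1213/183032565940224000)*t^11

set_option maxHeartbeats 1600000

/-- Numerator. -/
noncomputable def Nm (t : ℝ) : ℝ :=
  Real.exp (2*t) * t^4 - Real.exp t * t^4 - 4*t^3*Real.exp t - 4*t^3*Real.exp (2*t)
    + 12*t^2*Real.exp (2*t) - 12*Real.exp t*t^2 - 12*Real.exp t + 12*Real.exp (2*t)
    - 4*Real.exp (3*t) + 4

lemma key (t : ℝ) (ht : 0 < t) (ht3 : t < 1/3) :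
    |Nm t - P t * (-Real.exp t + 1 - 2*t + t^2)| ≤ 20000000 * t^14 := by
  set R1 := Real.exp t - T t with hR1
  set R2 := Real.exp (2*t) - T (2*t) with hR2
  set R3 := Real.exp (3*t) - T (3*t) with hR3
  have ht1 : |t| ≤ 1 := by rw [abs_of_pos ht]; linarith
  have ht2 : |2*t| ≤ 1 := by rw [abs_of_pos (by linarith)]; linarith
  have ht3' : |3*t| ≤ 1 := by rw [abs_of_pos (by linarith)]; linarith
  have hb1 : |R1| ≤ t^14 := by
    have := exp_taylor_bound t ht1
    rwa [abs_of_pos ht] at this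
  have hb2 : |R2| ≤ 16384 * t^14 := by
    have := exp_taylor_bound (2*t) ht2
    rw [abs_of_pos (by linarith : (0:ℝ) < 2*t)] at this
    calc |R2| ≤ (2*t)^14 := this
      _ = 16384 * t^14 := by ring
  have hb3 : |R3| ≤ 4782969 * t^14 := by
    have := exp_taylor_bound (3*t) ht3'
    rw [abs_of_pos (by linarith : (0:ℝ) < 3*t)] at this
    calc |R3| ≤ (3*t)^14 := this
      _ = 4782969 * t^14 := by ring
  have he1 : Real.exp t = T t + R1 := by rw [hR1]; ring
  have he2 : Real.exp (2*t) = T (2*t) + R2 := by rw [hR2]; ring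
  have he3 : Real.exp (3*t) = T (3*t) + R3 := by rw [hR3]; ring
  have hid : Nm t - P t * (-Real.exp t + 1 - 2*t + t^2)
      = t^14 * H t + (-t^4 - 4*t^3 - 12*t^2 - 12 + P t) * R1
        + (t^4 - 4*t^3 + 12*t^2 + 12) * R2 - 4 * R3 := by
    rw [Nm, he1, he2, he3, P, H, T, T, T]
    ring
  rw [hid]
  have htp : (0:ℝ) < t^14 := by positivity
  have hHt : |H t| ≤ 1/1000 := by
    rw [H]
    have h0 : (0:ℝ) ≤ t := le_of_lt ht
    rw [abs_of_nonneg (by positivity)]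
    nlinarith [pow_le_one₀ h0 (le_of_lt (by linarith : t < 1)) (n := 1),
      pow_le_one₀ h0 (le_of_lt (by linarith : t < 1)) (n := 2),
      pow_le_one₀ h0 (le_of_lt (by linarith : t < 1)) (n := 3),
      pow_le_one₀ h0 (le_of_lt (by linarith : t < 1)) (n := 4),
      pow_le_one₀ h0 (le_of_lt (by linarith : t < 1)) (n := 5),
      pow_le_one₀ h0 (le_of_lt (by linarith : t < 1)) (n := 6),
      pow_le_one₀ h0 (le_of_lt (by linarith : t < 1)) (n := 7),
      pow_le_one₀ h0 (le_of_lt (by linarith : t < 1)) (n := 8),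
      pow_le_one₀ h0 (le_of_lt (by linarith : t < 1)) (n := 9),
      pow_le_one₀ h0 (le_of_lt (by linarith : t < 1)) (n := 10),
      pow_le_one₀ h0 (le_of_lt (by linarith : t < 1)) (n := 11)]
  have hA1 : |(-t^4 - 4*t^3 - 12*t^2 - 12 + P t)| ≤ 20 := by
    rw [P]
    have h0 : (0:ℝ) ≤ t := le_of_lt ht
    have h1 : t ≤ 1 := by linarith
    rw [abs_le]
    constructor <;>
      nlinarith [pow_le_one₀ h0 h1 (n := 2), pow_le_one₀ h0 h1 (n := 3),
        pow_le_one₀ h0 h1 (n := 4), pow_le_one₀ h0 h1 (n := 8), pow_le_one₀ h0 h1 (n := 9),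
        pow_le_one₀ h0 h1 (n := 10), pow_le_one₀ h0 h1 (n := 11), pow_le_one₀ h0 h1 (n := 12),
        pow_nonneg h0 2, pow_nonneg h0 3, pow_nonneg h0 4, pow_nonneg h0 8,
        pow_nonneg h0 9, pow_nonneg h0 10, pow_nonneg h0 11, pow_nonneg h0 12]
  have hA2 : |(t^4 - 4*t^3 + 12*t^2 + 12)| ≤ 20 := by
    have h0 : (0:ℝ) ≤ t := le_of_lt ht
    have h1 : t ≤ 1 := by linarith
    rw [abs_le]
    constructor <;>
      nlinarith [pow_le_one₀ h0 h1 (n := 2), pow_le_one₀ h0 h1 (n := 3),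
        pow_le_one₀ h0 h1 (n := 4), pow_nonneg h0 2, pow_nonneg h0 3, pow_nonneg h0 4]
  calc |t^14 * H t + (-t^4 - 4*t^3 - 12*t^2 - 12 + P t) * R1
        + (t^4 - 4*t^3 + 12*t^2 + 12) * R2 - 4 * R3|
      ≤ |t^14 * H t| + |(-t^4 - 4*t^3 - 12*t^2 - 12 + P t) * R1|
        + |(t^4 - 4*t^3 + 12*t^2 + 12) * R2| + |4 * R3| := by
        have := abs_sub (t^14 * H t + (-t^4 - 4*t^3 - 12*t^2 - 12 + P t) * R1
          + (t^4 - 4*t^3 + 12*t^2 + 12) * R2) (4 * R3)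
        have h2 := abs_add_le (t^14 * H t + (-t^4 - 4*t^3 - 12*t^2 - 12 + P t) * R1)
          ((t^4 - 4*t^3 + 12*t^2 + 12) * R2)
        have h3 := abs_add_le (t^14 * H t) ((-t^4 - 4*t^3 - 12*t^2 - 12 + P t) * R1)
        calc _ ≤ |t^14 * H t + (-t^4 - 4*t^3 - 12*t^2 - 12 + P t) * R1
            + (t^4 - 4*t^3 + 12*t^2 + 12) * R2| + |4 * R3| := abs_sub _ _
          _ ≤ _ := by linarith
    _ ≤ t^14 * (1/1000) + 20 * (t^14) + 20 * (16384 * t^14) + 4 * (4782969 * t^14) := by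
        have h14 : |t^14| = t^14 := abs_of_pos (by positivity)
        have e1 : |t^14 * H t| ≤ t^14 * (1/1000) := by
          rw [abs_mul, h14]
          exact mul_le_mul_of_nonneg_left hHt (by positivity)
        have e2 : |(-t^4 - 4*t^3 - 12*t^2 - 12 + P t) * R1| ≤ 20 * t^14 := by
          rw [abs_mul]
          exact mul_le_mul hA1 hb1 (abs_nonneg _) (by norm_num)
        have e3 : |(t^4 - 4*t^3 + 12*t^2 + 12) * R2| ≤ 20 * (16384 * t^14) := by
          rw [abs_mul]
          exact mul_le_mul hA2 hb2 (abs_nonneg _) (by norm_num)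
        have e4 : |4 * R3| ≤ 4 * (4782969 * t^14) := by
          rw [abs_mul]
          have : |(4:ℝ)| = 4 := by norm_num
          rw [this]
          exact mul_le_mul_of_nonneg_left hb3 (by norm_num)
        linarith
    _ ≤ 20000000 * t^14 := by nlinarith [htp]

lemma denom_bound (t : ℝ) (ht : 0 < t) (ht3 : t < 1/3) :
    2*t ≤ |(-Real.exp t + 1 - 2*t + t^2)| ∧ (-Real.exp t + 1 - 2*t + t^2) < 0 := by
  have he : t + 1 ≤ Real.exp t := Real.add_one_le_exp t
  have hneg : (-Real.exp t + 1 - 2*t + t^2) < 0 := by nlinarith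
  constructor
  · rw [abs_of_neg hneg]
    nlinarith
  · exact hneg

lemma f_sub_P (t : ℝ) (ht : 0 < t) (ht3 : t < 1/3) :
    |f t - P t| ≤ 10000000 * t^13 := by
  obtain ⟨hd, hneg⟩ := denom_bound t ht ht3
  have hdne : (-Real.exp t + 1 - 2*t + t^2) ≠ 0 := ne_of_lt hneg
  have hfP : f t - P t
      = (Nm t - P t * (-Real.exp t + 1 - 2*t + t^2)) / (-Real.exp t + 1 - 2*t + t^2) := by
    rw [f, Nm]
    field_simp
  rw [hfP, abs_div]
  have hkey := key t ht ht3
  have h2t : (0:ℝ) < 2*t := by linarith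
  calc |Nm t - P t * (-Real.exp t + 1 - 2*t + t^2)| / |(-Real.exp t + 1 - 2*t + t^2)|
      ≤ (20000000 * t^14) / (2*t) := by
        apply div_le_div₀ (by positivity) hkey h2t hd
    _ = 10000000 * t^13 := by
        field_simp
        ring
  
theorem f_expansion :
    (∃ δ > (0:ℝ), ∃ C > (0:ℝ), ∀ t ∈ Set.Ioo (0:ℝ) δ,
      |f t - (t^8/6480 + t^9/3888 + 869*t^10/4082400 + 37*t^11/326592 + 1213*t^12/29393280)|
        ≤ C * t^13) ∧
    Filter.Tendsto (fun t => f t / t^8) (nhdsWithin 0 (Set.Ioi 0)) (nhds (1/6480)) := by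
  constructor
  · refine ⟨1/3, by norm_num, 10000000, by norm_num, fun t ht => ?_⟩
    have := f_sub_P t ht.1 ht.2
    rwa [P] at this
  · have hmem : Set.Ioo (0:ℝ) (1/3) ∈ nhdsWithin (0:ℝ) (Set.Ioi 0) :=
      Ioo_mem_nhdsGT_of_mem ⟨le_refl 0, by norm_num⟩
    have hbound : ∀ t ∈ Set.Ioo (0:ℝ) (1/3),
        ‖f t / t^8 - 1/6480‖ ≤ 10000001 * t := by
      intro t ht
      obtain ⟨ht0, ht3⟩ := ht
      have ht8 : (0:ℝ) < t^8 := by positivity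
      have h1 : |f t - P t| ≤ 10000000 * t^13 := f_sub_P t ht0 ht3
      have heq : f t / t^8 - 1/6480
          = (f t - P t)/t^8 + (t/3888 + 869*t^2/4082400 + 37*t^3/326592 + 1213*t^4/29393280) := by
        rw [P]
        field_simp
        ring
      rw [Real.norm_eq_abs, heq]
      have hA : |(f t - P t)/t^8| ≤ 10000000 * t := by
        rw [abs_div, abs_of_pos ht8]
        rw [div_le_iff₀ ht8]
        have h4 : t^4 ≤ 1 := pow_le_one₀ ht0.le (by linarith)
        calc |f t - P t| ≤ 10000000 * t^13 := h1
          _ = 10000000 * (t^4 * (t * t^8)) := by ring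
          _ ≤ 10000000 * (1 * (t * t^8)) := by
              have hpos : (0:ℝ) ≤ t * t^8 := by positivity
              nlinarith [mul_le_mul_of_nonneg_right h4 hpos]
          _ = 10000000 * t * t^8 := by ring
      have hB : |(t/3888 + 869*t^2/4082400 + 37*t^3/326592 + 1213*t^4/29393280)| ≤ t := by
        rw [abs_of_nonneg (by positivity)]
        have h1' : t ≤ 1 := by linarith
        have h2 : t^2 ≤ t := by nlinarith
        have h3 : t^3 ≤ t := by nlinarith
        have h4 : t^4 ≤ t := by nlinarith
        linarith
      calc |(f t - P t)/t^8 + (t/3888 + 869*t^2/4082400 + 37*t^3/326592 + 1213*t^4/29393280)|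
          ≤ |(f t - P t)/t^8| + |(t/3888 + 869*t^2/4082400 + 37*t^3/326592 + 1213*t^4/29393280)| :=
            abs_add_le _ _
        _ ≤ 10000001 * t := by linarith
    have hsq : Filter.Tendsto (fun t => f t / t^8 - 1/6480)
        (nhdsWithin 0 (Set.Ioi 0)) (nhds 0) := by
      have hg : Filter.Tendsto (fun t : ℝ => 10000001 * t)
          (nhdsWithin 0 (Set.Ioi 0)) (nhds 0) := by
        have : Filter.Tendsto (fun t : ℝ => 10000001 * t) (nhds 0) (nhds (10000001 * 0)) :=
          (continuous_const.mul continuous_id).tendsto 0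
        simpa using this.mono_left nhdsWithin_le_nhds
      exact squeeze_zero_norm' (by filter_upwards [hmem] with t ht using hbound t ht) hg
    have := hsq.add_const (1/6480)
    simpa using this
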